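/- Let q be an odd prime power and a ∈ 𝔽_q be such that x² + x + a is irreducible over 𝔽_q. Then the set S = {(t² + s·t + a·s², s, t) : s, t ∈ 𝔽_q} ⊆ 𝔽_q^3 is an affine cap of size q²: no three pairwise distinct points of S are collinear. -/

import Mathlib

private lemma bose_aniso {F : Type*} [Field F] (a : F)
    (hirr : Irreducible (Polynomial.X ^ 2 + Polynomial.X + Polynomial.C a)) :
    ∀ s t : F, t ^ 2 + s * t + a * s ^ 2 = 0 → s = 0 ∧ t = 0 := by
  intro s t h
  by_cases hs : s = 0
  · subst hs
    refine ⟨rfl, ?_⟩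
    have : t ^ 2 = 0 := by linear_combination h
    exact pow_eq_zero_iff (n := 2) (by norm_num) |>.mp this
  · exfalso
    have hval : (t / s) ^ 2 + (t / s) + a = 0 := by
      field_simp
      linear_combination h
    have hroot : Polynomial.IsRoot (Polynomial.X ^ 2 + Polynomial.X + Polynomial.C a) (t / s) := by
      simpa [Polynomial.IsRoot] using hval
    have h1 := Polynomial.degree_eq_one_of_irreducible_of_root hirr hroot
    have hdeg : (Polynomial.X ^ 2 + Polynomial.X + Polynomial.C a : Polynomial F).degree = 2 := by
      compute_degree!
    rw [hdeg] at h1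
    norm_num at h1

private lemma bose_alg {F : Type*} [Field F] (a : F)
    (haniso : ∀ s t : F, t ^ 2 + s * t + a * s ^ 2 = 0 → s = 0 ∧ t = 0)
    (s0 t0 s1 t1 s2 t2 α β : F)
    (hne1 : ¬(s1 = s0 ∧ t1 = t0)) (hne2 : ¬(s2 = s0 ∧ t2 = t0))
    (hne3 : ¬(s1 = s2 ∧ t1 = t2))
    (e1 : α * (s1 - s0) + β * (s2 - s0) = 0)
    (e2 : α * (t1 - t0) + β * (t2 - t0) = 0)
    (e3 : α * ((t1 ^ 2 + s1 * t1 + a * s1 ^ 2) - (t0 ^ 2 + s0 * t0 + a * s0 ^ 2)) +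
      β * ((t2 ^ 2 + s2 * t2 + a * s2 ^ 2) - (t0 ^ 2 + s0 * t0 + a * s0 ^ 2)) = 0) :
    α = 0 ∧ β = 0 := by
  have A : α * ((t1 - t0) ^ 2 + (s1 - s0) * (t1 - t0) + a * (s1 - s0) ^ 2) +
      β * ((t2 - t0) ^ 2 + (s2 - s0) * (t2 - t0) + a * (s2 - s0) ^ 2) = 0 := by
    linear_combination e3 - (2 * t0 + s0) * e2 - (t0 + 2 * a * s0) * e1
  by_cases hb : β = 0
  · subst hb
    by_cases ha : α = 0
    · exact ⟨ha, rfl⟩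
    · exfalso
      apply hne1
      constructor
      · rcases mul_eq_zero.mp (by linear_combination e1 : α * (s1 - s0) = 0) with h | h
        · exact absurd h ha
        · exact sub_eq_zero.mp h
      · rcases mul_eq_zero.mp (by linear_combination e2 : α * (t1 - t0) = 0) with h | h
        · exact absurd h ha
        · exact sub_eq_zero.mp h
  by_cases ha : α = 0
  · subst ha
    exfalso
    apply hne2
    constructor
    · rcases mul_eq_zero.mp (by linear_combination e1 : β * (s2 - s0) = 0) with h | h
      · exact absurd h hb
      · exact sub_eq_zero.mp h
    · rcases mul_eq_zero.mp (by linear_combination e2 : β * (t2 - t0) = 0) with h | h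
      · exact absurd h hb
      · exact sub_eq_zero.mp h
  exfalso
  have hQ1 : (t1 - t0) ^ 2 + (s1 - s0) * (t1 - t0) + a * (s1 - s0) ^ 2 ≠ 0 := by
    intro h
    obtain ⟨hu, hv⟩ := haniso _ _ h
    exact hne1 ⟨sub_eq_zero.mp hu, sub_eq_zero.mp hv⟩
  have key : α * β * (α + β) *
      ((t1 - t0) ^ 2 + (s1 - s0) * (t1 - t0) + a * (s1 - s0) ^ 2) = 0 := by
    linear_combination β ^ 2 * A +
      (β * (α * (t1 - t0) - β * (t2 - t0)) + β * α * (s1 - s0)) * e2 +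
      (-β ^ 2 * (t2 - t0) + a * β * (α * (s1 - s0) - β * (s2 - s0))) * e1
  have hsum : α + β = 0 := by
    rcases mul_eq_zero.mp key with h | h
    · rcases mul_eq_zero.mp h with h' | h'
      · rcases mul_eq_zero.mp h' with h'' | h''
        · exact absurd h'' ha
        · exact absurd h'' hb
      · exact h'
    · exact absurd h hQ1
  apply hne3
  have hba : β = -α := by linear_combination hsum
  subst hba
  constructor
  · rcases mul_eq_zero.mp (by linear_combination e1 : α * (s1 - s2) = 0) with h | h
    · exact absurd h ha
    · exact sub_eq_zero.mp h
  · rcases mul_eq_zero.mp (by linear_combination e2 : α * (t1 - t2) = 0) with h | h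
    · exact absurd h ha
    · exact sub_eq_zero.mp h

theorem bose_cap {F : Type*} [Field F] [Fintype F]
    (hodd : Odd (Fintype.card F)) (a : F)
    (hirr : Irreducible (Polynomial.X ^ 2 + Polynomial.X + Polynomial.C a))
    (S : Set (Fin 3 → F))
    (hS : S = {v | ∃ s t : F, v = ![t ^ 2 + s * t + a * s ^ 2, s, t]}) :
    S.ncard = Fintype.card F ^ 2 ∧
      ∀ x ∈ S, ∀ y ∈ S, ∀ z ∈ S, x ≠ y → x ≠ z → y ≠ z →
        LinearIndependent F ![y - x, z - x] := by
  have haniso := bose_aniso a hirr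
  constructor
  · have hSeq : S =
        (fun p : F × F => ![p.2 ^ 2 + p.1 * p.2 + a * p.1 ^ 2, p.1, p.2]) '' Set.univ := by
      rw [hS]
      ext v
      simp only [Set.mem_setOf_eq, Set.image_univ, Set.mem_range, Prod.exists]
      constructor
      · rintro ⟨s, t, rfl⟩; exact ⟨s, t, rfl⟩
      · rintro ⟨s, t, rfl⟩; exact ⟨s, t, rfl⟩
    have hinj : Function.Injective
        (fun p : F × F => ![p.2 ^ 2 + p.1 * p.2 + a * p.1 ^ 2, p.1, p.2]) := by
      rintro ⟨s1, t1⟩ ⟨s2, t2⟩ h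
      have h1 := congrFun h 1
      have h2 := congrFun h 2
      simp at h1 h2
      simp [h1, h2]
    rw [hSeq, Set.ncard_image_of_injective _ hinj, Set.ncard_univ, Nat.card_eq_fintype_card,
      Fintype.card_prod, sq]
  · intro x hx y hy z hz hxy hxz hyz
    rw [hS] at hx hy hz
    obtain ⟨s0, t0, rfl⟩ := hx
    obtain ⟨s1, t1, rfl⟩ := hy
    obtain ⟨s2, t2, rfl⟩ := hz
    rw [LinearIndependent.pair_iff]
    intro α β hst
    have e1 := congrFun hst 1
    have e2 := congrFun hst 2
    have e3 := congrFun hst 0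
    simp only [Pi.add_apply, Pi.smul_apply, Pi.sub_apply, Matrix.cons_val_zero,
      Matrix.cons_val_one, Matrix.head_cons, Matrix.cons_val_two, Matrix.tail_cons,
      smul_eq_mul, Pi.zero_apply] at e1 e2 e3
    have hne1 : ¬(s1 = s0 ∧ t1 = t0) := by
      rintro ⟨rfl, rfl⟩; exact hxy rfl
    have hne2 : ¬(s2 = s0 ∧ t2 = t0) := by
      rintro ⟨rfl, rfl⟩; exact hxz rfl
    have hne3 : ¬(s1 = s2 ∧ t1 = t2) := by
      rintro ⟨rfl, rfl⟩; exact hyz rfl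
    exact bose_alg a haniso s0 t0 s1 t1 s2 t2 α β hne1 hne2 hne3
      (by linear_combination e1) (by linear_combination e2) (by linear_combination e3)
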